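/- For every imaginary unit quaternion q (q.re = 0, ‖q‖ = 1), the (-I)-eigenspace of its image under the standard embedding Φ : ℍ → Matrix (Fin 2) (Fin 2) ℂ is one-dimensional: the kernel of the ℂ-linear endomorphism of ℂ² given by v ↦ (Φ q).mulVec v + I • v has complex dimension 1. (This underlies the paper's identification S² = PH of the sphere of admissible complex structures with the complex projective line, each imaginary unit quaternion being identified with its eigenspace for the eigenvalue -i.) -/

import Mathlib

open Complex Matrix

/-- The standard embedding of the quaternions into the `2 × 2` complex matrices:
`a + b·i + c·j + d·k ↦ ![![a + b·I, -c + d·I], ![c + d·I, a - b·I]]`. -/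
noncomputable def quatToMatrix (q : Quaternion ℝ) : Matrix (Fin 2) (Fin 2) ℂ :=
  ![![(q.re : ℂ) + (q.imI : ℂ) * I, -(q.imJ : ℂ) + (q.imK : ℂ) * I],
    ![(q.imJ : ℂ) + (q.imK : ℂ) * I, (q.re : ℂ) - (q.imI : ℂ) * I]]

theorem eigenspace_neg_I_one_dimensional (q : Quaternion ℝ)
    (hre : q.re = 0) (hnorm : ‖q‖ = 1) :
    Module.finrank ℂ
      (LinearMap.ker
        ((quatToMatrix q).mulVecLin + I • (LinearMap.id : (Fin 2 → ℂ) →ₗ[ℂ] (Fin 2 → ℂ)))) = 1 := by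
  -- norm condition in coordinates
  have hsq : q.imI ^ 2 + q.imJ ^ 2 + q.imK ^ 2 = 1 := by
    have h1 : Quaternion.normSq q = 1 := by
      rw [Quaternion.normSq_eq_norm_mul_self, hnorm]; norm_num
    rw [Quaternion.normSq_def', hre] at h1
    linarith
  set B : Matrix (Fin 2) (Fin 2) ℂ := quatToMatrix q + I • 1 with hB
  have hmap : (quatToMatrix q).mulVecLin +
      I • (LinearMap.id : (Fin 2 → ℂ) →ₗ[ℂ] (Fin 2 → ℂ)) = B.mulVecLin := by
    ext v i
    simp [hB, Matrix.add_mulVec, Matrix.smul_mulVec, Matrix.one_mulVec,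
      Matrix.one_apply, Pi.single_apply, eq_comm]
  rw [hmap]
  -- det B = 0
  have hdet : B.det = 0 := by
    have hc : (q.imI : ℂ) ^ 2 + (q.imJ : ℂ) ^ 2 + (q.imK : ℂ) ^ 2 = 1 := by
      norm_cast
    simp only [hB, Matrix.det_fin_two, Matrix.add_apply, Matrix.smul_apply, Matrix.one_apply]
    simp only [quatToMatrix, hre]
    simp only [Fin.isValue, Matrix.cons_val', Matrix.cons_val_zero, Matrix.empty_val',
      Matrix.cons_val_fin_one, Matrix.cons_val_one, Matrix.head_cons, Matrix.head_fin_const]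
    norm_num
    linear_combination hc + (1 - (q.imI : ℂ) ^ 2 - (q.imK : ℂ) ^ 2) * Complex.I_sq
  -- kernel nontrivial
  have hker_ne_bot : LinearMap.ker B.mulVecLin ≠ ⊥ := by
    obtain ⟨v, hv, hv0⟩ := (Matrix.exists_mulVec_eq_zero_iff).2 hdet
    intro h
    rw [Submodule.eq_bot_iff] at h
    exact hv (h v (by simpa using hv0))
  -- kernel not everything
  have hker_ne_top : LinearMap.ker B.mulVecLin ≠ ⊤ := by
    intro h
    rw [LinearMap.ker_eq_top] at h
    have h0 : B 0 0 = 0 := by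
      have := congrFun (congrFun (congrArg DFunLike.coe h) (Pi.single 0 1)) 0
      simpa [Matrix.mulVec_single_one] using this
    have h1 : B 1 1 = 0 := by
      have := congrFun (congrFun (congrArg DFunLike.coe h) (Pi.single 1 1)) 1
      simpa [Matrix.mulVec_single_one] using this
    simp only [hB, Matrix.add_apply, Matrix.smul_apply, Matrix.one_apply] at h0 h1
    simp only [quatToMatrix, hre,
      Fin.isValue, Matrix.cons_val', Matrix.cons_val_zero, Matrix.empty_val',
      Matrix.cons_val_fin_one, Matrix.cons_val_one, Matrix.head_cons, Matrix.head_fin_const] at h0 h1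
    simp only [smul_eq_mul, Complex.ofReal_zero, if_true] at h0 h1
    have h2 : (2 : ℂ) * I = 0 := by linear_combination h0 + h1
    simp [Complex.I_ne_zero] at h2
  -- conclude
  have htot : Module.finrank ℂ (Fin 2 → ℂ) = 2 := by simp
  have hle : Module.finrank ℂ (LinearMap.ker B.mulVecLin) ≤ 2 := by
    have h := Submodule.finrank_le (LinearMap.ker B.mulVecLin)
    rwa [htot] at h
  have hpos : 0 < Module.finrank ℂ (LinearMap.ker B.mulVecLin) := by
    rw [Module.finrank_pos_iff]
    exact Submodule.nontrivial_iff_ne_bot.2 hker_ne_bot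
  have hne2 : Module.finrank ℂ (LinearMap.ker B.mulVecLin) ≠ 2 := by
    intro h
    exact hker_ne_top (Submodule.eq_top_of_finrank_eq (by rw [h, htot]))
  omega
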